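/- Let (c_k)_{k ∈ ℕ} be a countable family of real sequences c_k : ℕ → ℝ and let (A_k)_{k ∈ ℕ}, (B_k)_{k ∈ ℕ} be real numbers. Assume that for each k there exists a subset S_k ⊆ ℕ of natural density 1 such that for every ε > 0 the sets {j ∈ S_k : c_k(j) < A_k − ε} and {j ∈ S_k : c_k(j) > B_k + ε} are finite. Then there exists a single subset S ⊆ ℕ of natural density 1 such that for every k and every ε > 0 the sets {j ∈ S : c_k(j) < A_k − ε} and {j ∈ S : c_k(j) > B_k + ε} are finite; that is, A_k ≤ liminf_{j→∞, j∈S} c_k(j) ≤ limsup_{j→∞, j∈S} c_k(j) ≤ B_k for every k. -/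

import Mathlib

open scoped Classical

/-- A subset `S ⊆ ℕ` has natural density one if
`(1/n) · #(S ∩ {0,…,n-1}) → 1` as `n → ∞`. -/
def HasDensityOne (S : Set ℕ) : Prop :=
  Filter.Tendsto
    (fun n : ℕ => (((Finset.range n).filter (fun j => j ∈ S)).card : ℝ) / n)
    Filter.atTop (nhds 1)

noncomputable def densRatio (X : Set ℕ) (n : ℕ) : ℝ :=
  (((Finset.range n).filter (fun j => j ∈ X)).card : ℝ) / n

lemma filter_classical {p : ℕ → Prop} [h1 : DecidablePred p] (s : Finset ℕ) :
    s.filter p = @Finset.filter _ p (fun a => Classical.propDecidable (p a)) s :=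
 by
  ext x
  simp only [Finset.mem_filter]

lemma densRatio_nonneg (X : Set ℕ) (n : ℕ) : 0 ≤ densRatio X n := by
  unfold densRatio; positivity

lemma densRatio_le_one (X : Set ℕ) (n : ℕ) : densRatio X n ≤ 1 := by
  unfold densRatio
  rcases Nat.eq_zero_or_pos n with h | h
  · simp [h]
  · rw [div_le_one (by exact_mod_cast h)]
    exact_mod_cast (Finset.card_filter_le _ _).trans_eq (Finset.card_range n)

lemma hasDensityOne_iff (X : Set ℕ) :
    HasDensityOne X ↔ Filter.Tendsto (densRatio X) Filter.atTop (nhds 1) := Iff.rfl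

lemma HasDensityOne.inter {X Y : Set ℕ} (hX : HasDensityOne X) (hY : HasDensityOne Y) :
    HasDensityOne (X ∩ Y) := by
  rw [hasDensityOne_iff] at *
  have hub : ∀ n, densRatio (X ∩ Y) n ≤ densRatio X n := by
    intro n
    unfold densRatio
    have hc : ((Finset.range n).filter (fun j => j ∈ X ∩ Y)).card
        ≤ ((Finset.range n).filter (fun j => j ∈ X)).card := by
      apply Finset.card_le_card
      intro j hj
      rw [Finset.mem_filter] at hj ⊢
      exact ⟨hj.1, hj.2.1⟩
    try simp only [filter_classical] at hc ⊢
    exact div_le_div_of_nonneg_right (by exact_mod_cast hc) (Nat.cast_nonneg n)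
  have hlb : ∀ n, densRatio X n + densRatio Y n - 1 ≤ densRatio (X ∩ Y) n := by
    intro n
    rcases Nat.eq_zero_or_pos n with h | h
    · simp [densRatio, h]
    · have hn : (0:ℝ) < n := by exact_mod_cast h
      have hcard : ((Finset.range n).filter (fun j => j ∈ X)).card
          + ((Finset.range n).filter (fun j => j ∈ Y)).card
          ≤ ((Finset.range n).filter (fun j => j ∈ X ∩ Y)).card + n := by
        have h1 : (Finset.range n).filter (fun j => j ∈ X ∩ Y)
            = ((Finset.range n).filter (fun j => j ∈ X)) ∩
              ((Finset.range n).filter (fun j => j ∈ Y)) := by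
          ext j
          simp only [Finset.mem_filter, Finset.mem_inter, Set.mem_inter_iff]
          tauto
        have h2 := Finset.card_inter_add_card_union
          ((Finset.range n).filter (fun j => j ∈ X))
          ((Finset.range n).filter (fun j => j ∈ Y))
        have h3 : (((Finset.range n).filter (fun j => j ∈ X)) ∪
            ((Finset.range n).filter (fun j => j ∈ Y))).card ≤ n := by
          calc _ ≤ (Finset.range n).card := Finset.card_le_card
                  (Finset.union_subset (Finset.filter_subset _ _) (Finset.filter_subset _ _))
            _ = n := Finset.card_range n
        rw [h1]
        omega
      have hcR : (((Finset.range n).filter (fun j => j ∈ X)).card : ℝ)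
          + ((Finset.range n).filter (fun j => j ∈ Y)).card
          ≤ (((Finset.range n).filter (fun j => j ∈ X ∩ Y)).card : ℝ) + n := by
        exact_mod_cast hcard
      unfold densRatio
      rw [← add_div, sub_le_iff_le_add, div_add' _ _ _ hn.ne',
        div_le_div_iff_of_pos_right hn]
      try simp only [filter_classical] at hcR ⊢
      linarith
  have hlow : Filter.Tendsto (fun n => densRatio X n + densRatio Y n - 1)
      Filter.atTop (nhds 1) := by
    convert (hX.add hY).sub (tendsto_const_nhds (x := (1:ℝ))) using 2 <;> norm_num
  exact tendsto_of_tendsto_of_tendsto_of_le_of_le hlow hX hlb hub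

/-- The decreasing family of finite intersections. -/
def interFam (Sk : ℕ → Set ℕ) : ℕ → Set ℕ
  | 0 => Sk 0
  | k + 1 => interFam Sk k ∩ Sk (k + 1)

lemma interFam_density {Sk : ℕ → Set ℕ} (hd : ∀ k, HasDensityOne (Sk k)) :
    ∀ k, HasDensityOne (interFam Sk k)
  | 0 => hd 0
  | k + 1 => (interFam_density hd k).inter (hd (k + 1))

lemma interFam_subset (Sk : ℕ → Set ℕ) : ∀ k, interFam Sk k ⊆ Sk k
  | 0 => subset_rfl
  | _ + 1 => Set.inter_subset_right

lemma interFam_antitone (Sk : ℕ → Set ℕ) : ∀ {k m : ℕ}, k ≤ m →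
    interFam Sk m ⊆ interFam Sk k := by
  intro k m hkm
  induction m with
  | zero => simp_all
  | succ m ih =>
    rcases Nat.lt_or_ge k (m + 1) with h | h
    · exact Set.Subset.trans Set.inter_subset_left (ih (Nat.lt_succ_iff.mp h))
    · have : k = m + 1 := le_antisymm hkm h
      subst this; exact subset_rfl

lemma exists_common (Sk : ℕ → Set ℕ) (hd : ∀ k, HasDensityOne (Sk k)) :
    ∃ S : Set ℕ, HasDensityOne S ∧ ∀ k, (S \ Sk k).Finite := by
  set T := interFam Sk with hTdef
  have hT : ∀ k, HasDensityOne (T k) := interFam_density hd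
  have hchoose : ∀ k : ℕ, ∃ N : ℕ, k ≤ N ∧
      ∀ n ≥ N, 1 - 1 / (k + 1 : ℝ) < densRatio (T k) n := by
    intro k
    have h1 : (0:ℝ) < 1 / (k + 1 : ℝ) := by positivity
    have htk := (hasDensityOne_iff _).mp (hT k)
    rw [Metric.tendsto_atTop] at htk
    obtain ⟨N, hN⟩ := htk _ h1
    refine ⟨max N k, le_max_right _ _, fun n hn => ?_⟩
    have hdist := hN n (le_trans (le_max_left _ _) hn)
    rw [Real.dist_eq, abs_lt] at hdist
    linarith [hdist.1]
  choose N hNle hNd using hchoose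
  set mf : ℕ → ℕ := fun j => Nat.findGreatest (fun i => N i ≤ j) j with hmf
  have hm1 : ∀ j, N 0 ≤ j → N (mf j) ≤ j := fun j h =>
    Nat.findGreatest_spec (P := fun i => N i ≤ j) (Nat.zero_le j) h
  have hm2 : ∀ j k, N k ≤ j → k ≤ mf j := fun j k h =>
    Nat.le_findGreatest ((hNle k).trans h) h
  set S : Set ℕ := {j | N 0 ≤ j ∧ j ∈ T (mf j)} with hSdef
  have hm3 : ∀ j n, j ≤ n → N 0 ≤ j → mf j ≤ mf n := by
    intro j n hjn h0
    exact Nat.le_findGreatest ((Nat.findGreatest_le j).trans hjn) ((hm1 j h0).trans hjn)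
  refine ⟨S, ?_, ?_⟩
  · -- density
    rw [hasDensityOne_iff, Metric.tendsto_atTop]
    intro ε hε
    obtain ⟨K, hK⟩ := exists_nat_one_div_lt (half_pos hε)
    refine ⟨max (max (N K) (N 0)) (⌈2 * (N 0 : ℝ) / ε⌉₊ + 1), fun n hn => ?_⟩
    have hnNK : N K ≤ n := le_trans (le_trans (le_max_left _ _) (le_max_left _ _)) hn
    have hnN0 : N 0 ≤ n := le_trans (le_trans (le_max_right _ _) (le_max_left _ _)) hn
    have hnM : (⌈2 * (N 0 : ℝ) / ε⌉₊ + 1) ≤ n := le_trans (le_max_right _ _) hn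
    have hnpos : 0 < n := lt_of_lt_of_le (Nat.succ_pos _) hnM
    have hnR : (0:ℝ) < n := by exact_mod_cast hnpos
    set m := mf n with hm
    have hKm : K ≤ m := hm2 n K hnNK
    have hNmn : N m ≤ n := hm1 n hnN0
    have hratio : 1 - 1 / (m + 1 : ℝ) < densRatio (T m) n := hNd m n hNmn
    have hmono : 1 / (m + 1 : ℝ) ≤ 1 / (K + 1 : ℝ) := by
      have hc : (K:ℝ) + 1 ≤ (m:ℝ) + 1 := by exact_mod_cast Nat.succ_le_succ hKm
      exact one_div_le_one_div_of_le (by positivity) hc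
    -- counting
    have hsub : ((Finset.range n).filter (fun j => j ∈ T m)) \ Finset.range (N 0)
        ⊆ (Finset.range n).filter (fun j => j ∈ S) := by
      intro j hj
      rw [Finset.mem_sdiff, Finset.mem_filter, Finset.mem_range] at hj
      obtain ⟨⟨hjn, hjT⟩, hjN0⟩ := hj
      rw [Finset.mem_range] at hjN0
      have h0j : N 0 ≤ j := not_lt.mp hjN0
      have hmfj : mf j ≤ m := hm3 j n (le_of_lt hjn) h0j
      refine Finset.mem_filter.mpr ⟨Finset.mem_range.mpr hjn, h0j, ?_⟩
      exact interFam_antitone Sk hmfj hjT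
    have hcard : (((Finset.range n).filter (fun j => j ∈ T m)).card : ℝ)
        ≤ (((Finset.range n).filter (fun j => j ∈ S)).card : ℝ) + N 0 := by
      have h1 : ((Finset.range n).filter (fun j => j ∈ T m)).card
          ≤ (((Finset.range n).filter (fun j => j ∈ T m)) \ Finset.range (N 0)).card
            + (Finset.range (N 0)).card := Finset.card_le_card_sdiff_add_card
      have h2 := Finset.card_le_card hsub
      rw [Finset.card_range] at h1
      exact_mod_cast le_trans h1 (by omega)
    have hlow : densRatio (T m) n - (N 0 : ℝ) / n ≤ densRatio S n := by
      unfold densRatio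
      rw [sub_le_iff_le_add, ← add_div]
      apply div_le_div_of_nonneg_right ?_ hnR.le
      try simp only [filter_classical] at hcard ⊢
      exact hcard
    have hN0n : (N 0 : ℝ) / n < ε / 2 := by
      have h1 : 2 * (N 0 : ℝ) / ε ≤ ⌈2 * (N 0 : ℝ) / ε⌉₊ := Nat.le_ceil _
      have h2 : (⌈2 * (N 0 : ℝ) / ε⌉₊ : ℝ) + 1 ≤ n := by exact_mod_cast hnM
      have h3 : 2 * (N 0 : ℝ) / ε < n := by linarith
      rw [div_lt_div_iff₀ hnR (by norm_num : (0:ℝ) < 2)]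
      rw [div_lt_iff₀ hε] at h3
      linarith
    have hle1 : densRatio S n ≤ 1 := densRatio_le_one S n
    have : 1 - ε < densRatio S n := by linarith
    rw [Real.dist_eq, abs_lt]
    constructor <;> linarith
  · -- finiteness
    intro k
    apply (Set.finite_Iio (N k)).subset
    intro j hj
    obtain ⟨hjS, hjk⟩ := hj
    by_contra hge
    rw [Set.mem_Iio, not_lt] at hge
    have : k ≤ mf j := hm2 j k hge
    exact hjk (interFam_subset Sk k (interFam_antitone Sk this hjS.2))

/-- Combining per-observable density-one subsets: if for each `k` there is a density-one
subset `S k` along which `A k ≤ liminf c k ≤ limsup c k ≤ B k`, then there is a single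
density-one subset `S` along which these inequalities hold for every `k`. -/
theorem combine_density_one_subsets (c : ℕ → ℕ → ℝ) (A B : ℕ → ℝ)
    (h : ∀ k : ℕ, ∃ Sk : Set ℕ, HasDensityOne Sk ∧
      ∀ ε : ℝ, 0 < ε →
        {j ∈ Sk | c k j < A k - ε}.Finite ∧ {j ∈ Sk | c k j > B k + ε}.Finite) :
    ∃ S : Set ℕ, HasDensityOne S ∧
      ∀ k : ℕ, ∀ ε : ℝ, 0 < ε →
        {j ∈ S | c k j < A k - ε}.Finite ∧ {j ∈ S | c k j > B k + ε}.Finite := by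
  choose Sk hdk hfin using h
  obtain ⟨S, hS, hSfin⟩ := exists_common Sk hdk
  refine ⟨S, hS, fun k ε hε => ⟨?_, ?_⟩⟩
  · apply ((hSfin k).union (hfin k ε hε).1).subset
    intro j ⟨hjS, hjc⟩
    by_cases hjSk : j ∈ Sk k
    · exact Or.inr ⟨hjSk, hjc⟩
    · exact Or.inl ⟨hjS, hjSk⟩
  · apply ((hSfin k).union (hfin k ε hε).2).subset
    intro j ⟨hjS, hjc⟩
    by_cases hjSk : j ∈ Sk k
    · exact Or.inr ⟨hjSk, hjc⟩
    · exact Or.inl ⟨hjS, hjSk⟩
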